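/- Let R be a ∂-simple commutative ℚ-algebra with derivation ∂ (hence an integral domain), and let L = Frac(R) be its fraction field with the unique extension of ∂. Then the field of constants of L equals the field of constants of R, i.e., every element a/b ∈ L with ∂(a/b) = 0 already lies in R^∂. -/
import Mathlib


/-- Let `R` be a `∂`-simple commutative ℚ-algebra with derivation `D` (a domain), let `L`
be its fraction field, and let `D'` be a derivation on `L` extending `D`. Then every
constant of `L` is (the image of) a constant of `R`. -/
theorem stmt_4 {R L : Type*} [CommRing R] [Algebra ℚ R] [Nontrivial R] [IsDomain R]
    [Field L] [Algebra ℚ L] [Algebra R L] [IsFractionRing R L]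
    (D : Derivation ℚ R R)
    (hsimple : ∀ I : Ideal R, (∀ a ∈ I, D a ∈ I) → I = ⊥ ∨ I = ⊤)
    (D' : Derivation ℚ L L)
    (hext : ∀ r : R, D' (algebraMap R L r) = algebraMap R L (D r)) :
    ∀ a : L, D' a = 0 → ∃ r : R, D r = 0 ∧ algebraMap R L r = a := by
  intro a ha
  set f := algebraMap R L with hf
  -- the ideal of denominators of `a`
  let I : Ideal R :=
    { carrier := {b : R | ∃ c : R, f b * a = f c}
      add_mem' := by
        rintro x y ⟨cx, hx⟩ ⟨cy, hy⟩
        exact ⟨cx + cy, by rw [map_add, map_add, add_mul, hx, hy]⟩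
      zero_mem' := ⟨0, by simp⟩
      smul_mem' := by
        rintro r x ⟨c, hx⟩
        exact ⟨r * c, by rw [smul_eq_mul, map_mul, map_mul, mul_assoc, hx]⟩ }
  have hDI : ∀ b ∈ I, D b ∈ I := by
    rintro b ⟨c, hc⟩
    refine ⟨D c, ?_⟩
    have h1 : D' (f b * a) = D' (f c) := by rw [hc]
    rw [Derivation.leibniz, ha, hext, hext, smul_zero, zero_add, smul_eq_mul,
      mul_comm] at h1
    exact h1
  have hIne : I ≠ ⊥ := by
    obtain ⟨⟨x, s⟩, hs⟩ := IsLocalization.surj (nonZeroDivisors R) a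
    have hsI : (s : R) ∈ I := ⟨x, by rw [mul_comm]; exact hs⟩
    intro hbot
    rw [hbot, Ideal.mem_bot] at hsI
    exact nonZeroDivisors.coe_ne_zero s hsI
  have hItop : I = ⊤ := (hsimple I hDI).resolve_left hIne
  have h1 : (1 : R) ∈ I := hItop ▸ Submodule.mem_top
  obtain ⟨r, hr⟩ := h1
  rw [map_one, one_mul] at hr
  refine ⟨r, ?_, hr.symm⟩
  have : f (D r) = 0 := by rw [← hext, ← hr, ha]
  exact IsFractionRing.injective R L (by rw [this, map_zero])
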